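/- arXiv:0908.3556 — 3 statements merged into one kernel-verified Lean document; each statement's English description precedes it below -/
import Mathlib

section
/- Let A be a positive random variable with Lebesgue density g satisfying g(a) ≤ C₂ a^p exp(−D₂ a^d (log a)^q) for all sufficiently large a, where C₂, D₂ > 0, p ∈ ℝ, q ≥ 0 and d ≥ 1 is an integer. Then for every a > e with a^d (log a)^q > 2|p − d + 1|/(D₂ d), one has P(A > a) ≤ 2 C₂ a^{p−d+1} exp(−D₂ a^d (log a)^q)/(D₂ d (log a)^q). -/
open MeasureTheory Real
open Filter Topology

noncomputable def Gfun (D₂ p q : ℝ) (d : ℕ) (s : ℝ) : ℝ :=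
  s ^ (p - d + 1) * Real.exp (-D₂ * s ^ (d : ℝ) * Real.log s ^ q) / Real.log s ^ q

noncomputable def Gd (D₂ p q : ℝ) (d : ℕ) (x : ℝ) : ℝ :=
  (((p - (d : ℝ) + 1) * x ^ (p - (d : ℝ) + 1 - 1) * Real.exp (-D₂ * x ^ (d : ℝ) * Real.log x ^ q)
      + x ^ (p - (d : ℝ) + 1) * (Real.exp (-D₂ * x ^ (d : ℝ) * Real.log x ^ q) *
          (-D₂ * ((d : ℝ) * x ^ ((d : ℝ) - 1)) * Real.log x ^ q
            + -D₂ * x ^ (d : ℝ) * (q * Real.log x ^ (q - 1) * x⁻¹)))) * Real.log x ^ q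
    - x ^ (p - (d : ℝ) + 1) * Real.exp (-D₂ * x ^ (d : ℝ) * Real.log x ^ q) *
        (q * Real.log x ^ (q - 1) * x⁻¹)) / (Real.log x ^ q) ^ 2

lemma Gfun_hasDerivAt (D₂ p q : ℝ) (d : ℕ) {x : ℝ} (hx : Real.exp 1 < x) :
    HasDerivAt (Gfun D₂ p q d) (Gd D₂ p q d x) x := by
  have hx0 : 0 < x := (Real.exp_pos 1).trans hx
  have hxne : x ≠ 0 := hx0.ne'
  have hL1 : 1 < Real.log x := (Real.lt_log_iff_exp_lt hx0).2 hx
  have hL0 : 0 < Real.log x := zero_lt_one.trans hL1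
  have hLne : Real.log x ≠ 0 := hL0.ne'
  have hLqne : Real.log x ^ q ≠ 0 := (Real.rpow_pos_of_pos hL0 q).ne'
  have h1 : HasDerivAt (fun s : ℝ => s ^ (p - (d : ℝ) + 1))
      ((p - (d : ℝ) + 1) * x ^ (p - (d : ℝ) + 1 - 1)) x :=
    Real.hasDerivAt_rpow_const (Or.inl hxne)
  have hlog : HasDerivAt Real.log x⁻¹ x := Real.hasDerivAt_log hxne
  have hLq : HasDerivAt (fun s : ℝ => Real.log s ^ q)
      (q * Real.log x ^ (q - 1) * x⁻¹) x := by
    have := (Real.hasDerivAt_rpow_const (p := q) (Or.inl hLne)).comp x hlog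
    exact this
  have hxd : HasDerivAt (fun s : ℝ => s ^ (d : ℝ)) ((d : ℝ) * x ^ ((d : ℝ) - 1)) x :=
    Real.hasDerivAt_rpow_const (Or.inl hxne)
  have hφ : HasDerivAt (fun s : ℝ => -D₂ * s ^ (d : ℝ) * Real.log s ^ q)
      (-D₂ * ((d : ℝ) * x ^ ((d : ℝ) - 1)) * Real.log x ^ q
        + -D₂ * x ^ (d : ℝ) * (q * Real.log x ^ (q - 1) * x⁻¹)) x := by
    exact (hxd.const_mul (-D₂)).mul hLq
  have hE := hφ.exp
  have hu := h1.mul hE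
  exact hu.div hLq hLqne

lemma Gd_key (D₂ p q : ℝ) (hD₂ : 0 < D₂) (hq : 0 ≤ q) (d : ℕ) (hd : 1 ≤ d)
    {a x : ℝ} (hae : Real.exp 1 < a) (hax : a ≤ x)
    (hcond : 2 * |p - (d : ℝ) + 1| / (D₂ * d) < a ^ (d : ℝ) * Real.log a ^ q) :
    D₂ * d / 2 * (x ^ p * Real.exp (-D₂ * x ^ (d : ℝ) * Real.log x ^ q))
      ≤ -Gd D₂ p q d x := by
  have hd0 : (0 : ℝ) < d := by exact_mod_cast Nat.lt_of_lt_of_le Nat.zero_lt_one hd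
  have hDd : 0 < D₂ * d := mul_pos hD₂ hd0
  have ha0 : 0 < a := (Real.exp_pos 1).trans hae
  have hx0 : 0 < x := ha0.trans_le hax
  have hxne : x ≠ 0 := hx0.ne'
  have hLa1 : 1 < Real.log a := (Real.lt_log_iff_exp_lt ha0).2 hae
  have hL1 : 1 < Real.log x := hLa1.trans_le (Real.log_le_log ha0 hax)
  have hL0 : 0 < Real.log x := zero_lt_one.trans hL1
  have hLq0 : 0 < Real.log x ^ q := Real.rpow_pos_of_pos hL0 q
  -- monotonicity of s^d (log s)^q
  have hmono : a ^ (d : ℝ) * Real.log a ^ q ≤ x ^ (d : ℝ) * Real.log x ^ q := by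
    apply mul_le_mul (Real.rpow_le_rpow ha0.le hax (by positivity))
      (Real.rpow_le_rpow (zero_lt_one.trans hLa1).le (Real.log_le_log ha0 hax) hq)
      (by positivity) (by positivity)
  have hm : |p - (d : ℝ) + 1| ≤ D₂ * d / 2 * (x ^ (d : ℝ) * Real.log x ^ q) := by
    rw [div_lt_iff₀ hDd] at hcond
    nlinarith [hcond.trans_le (by nlinarith : (a ^ (d : ℝ) * Real.log a ^ q) * (D₂ * d)
      ≤ (x ^ (d : ℝ) * Real.log x ^ q) * (D₂ * d))]
  -- rewrite the rpow differences
  have hxm1 : x ^ (p - (d : ℝ) + 1 - 1) = x ^ (p - (d : ℝ) + 1) / x := by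
    rw [Real.rpow_sub hx0, Real.rpow_one]
  have hxd1 : x ^ ((d : ℝ) - 1) = x ^ (d : ℝ) / x := by
    rw [Real.rpow_sub hx0, Real.rpow_one]
  have hLq1 : Real.log x ^ (q - 1) = Real.log x ^ q / Real.log x := by
    rw [Real.rpow_sub hL0, Real.rpow_one]
  have hxp : x ^ (p - (d : ℝ) + 1) * x ^ (d : ℝ) = x ^ p * x := by
    rw [← Real.rpow_add hx0, show p - (d : ℝ) + 1 + d = p + 1 by ring,
      Real.rpow_add hx0, Real.rpow_one]
  set L := Real.log x with hLdef
  set E := Real.exp (-D₂ * x ^ (d : ℝ) * L ^ q) with hEdef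
  set T := x ^ (p - (d : ℝ) + 1) with hTdef
  set Xd := x ^ (d : ℝ) with hXdef
  have hE0 : 0 < E := Real.exp_pos _
  have hT0 : 0 < T := Real.rpow_pos_of_pos hx0 _
  have hX0 : 0 < Xd := Real.rpow_pos_of_pos hx0 _
  have e1 : -Gd D₂ p q d x = (E * T) *
      ((D₂ * d * Xd * L * L ^ q + D₂ * Xd * q * L ^ q + q - (p - (d : ℝ) + 1) * L)
        / (x * L * L ^ q)) := by
    unfold Gd
    rw [hxm1, hxd1, hLq1]
    rw [← hLdef, ← hEdef, ← hTdef, ← hXdef]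
    field_simp
    ring
  rw [e1]
  have hbr : D₂ * d / 2 * (Xd * L * L ^ q)
      ≤ D₂ * d * Xd * L * L ^ q + D₂ * Xd * q * L ^ q + q - (p - (d : ℝ) + 1) * L := by
    have h1 : (p - (d : ℝ) + 1) * L ≤ D₂ * d / 2 * (Xd * L ^ q) * L := by
      apply mul_le_mul_of_nonneg_right _ hL0.le
      exact (le_abs_self _).trans hm
    nlinarith [mul_nonneg (mul_nonneg hD₂.le hX0.le) (mul_nonneg hq hLq0.le)]
  calc D₂ * ↑d / 2 * (x ^ p * E)
      = (E * T) * ((D₂ * d / 2 * (Xd * L * L ^ q)) / (x * L * L ^ q)) := by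
        rw [mul_div_assoc']
        rw [eq_div_iff (by positivity)]
        have : E * T * (D₂ * ↑d / 2 * (Xd * L * L ^ q)) = (T * Xd) * (D₂ * ↑d / 2) * E * (L * L ^ q) := by ring
        rw [this, hxp]
        ring
    _ ≤ (E * T) * ((D₂ * d * Xd * L * L ^ q + D₂ * Xd * q * L ^ q + q - (p - (d : ℝ) + 1) * L)
        / (x * L * L ^ q)) := by
        gcongr

lemma Gfun_tendsto (D₂ p q : ℝ) (hD₂ : 0 < D₂) (hq : 0 ≤ q) (d : ℕ) (hd : 1 ≤ d) :
    Tendsto (Gfun D₂ p q d) atTop (𝓝 0) := by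
  have h := tendsto_rpow_mul_exp_neg_mul_atTop_nhds_zero (p - (d : ℝ) + 1) D₂ hD₂
  apply tendsto_of_tendsto_of_tendsto_of_le_of_le' tendsto_const_nhds h
  · filter_upwards [eventually_gt_atTop (Real.exp 1)] with x hx
    have hx0 : 0 < x := (Real.exp_pos 1).trans hx
    have hL0 : 0 < Real.log x := zero_lt_one.trans ((Real.lt_log_iff_exp_lt hx0).2 hx)
    unfold Gfun
    positivity
  · filter_upwards [eventually_gt_atTop (Real.exp 1)] with x hx
    have hx0 : 0 < x := (Real.exp_pos 1).trans hx
    have hx1 : 1 ≤ x := le_of_lt (lt_trans (by simpa using Real.exp_lt_exp.mpr one_pos) hx)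
    have hL1 : 1 < Real.log x := (Real.lt_log_iff_exp_lt hx0).2 hx
    have hLq1 : 1 ≤ Real.log x ^ q := Real.one_le_rpow hL1.le hq
    have hT0 : (0:ℝ) ≤ x ^ (p - (d : ℝ) + 1) := (Real.rpow_pos_of_pos hx0 _).le
    have hxs : x ≤ x ^ (d : ℝ) * Real.log x ^ q := by
      have h1 : x ≤ x ^ (d : ℝ) := by
        nth_rewrite 1 [← Real.rpow_one x]
        exact Real.rpow_le_rpow_of_exponent_le hx1 (by exact_mod_cast hd)
      calc x ≤ x ^ (d : ℝ) := h1
        _ = x ^ (d : ℝ) * 1 := (mul_one _).symm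
        _ ≤ x ^ (d : ℝ) * Real.log x ^ q := by gcongr
    have hEle : Real.exp (-D₂ * x ^ (d : ℝ) * Real.log x ^ q) ≤ Real.exp (-D₂ * x) := by
      apply Real.exp_le_exp.2
      rw [mul_assoc, neg_mul, neg_mul]
      exact neg_le_neg (by nlinarith)
    unfold Gfun
    calc x ^ (p - (d : ℝ) + 1) * Real.exp (-D₂ * x ^ (d : ℝ) * Real.log x ^ q) / Real.log x ^ q
        ≤ x ^ (p - (d : ℝ) + 1) * Real.exp (-D₂ * x ^ (d : ℝ) * Real.log x ^ q) :=
          div_le_self (by positivity) hLq1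
      _ ≤ x ^ (p - (d : ℝ) + 1) * Real.exp (-D₂ * x) := by gcongr

/-- Tail bound for a positive random variable with a Lebesgue density `g`
satisfying `g(a) ≤ C₂ a^p exp(−D₂ a^d (log a)^q)` for all sufficiently large
`a`. Then for every `a > e` (beyond the threshold) with
`a^d (log a)^q > 2|p − d + 1|/(D₂ d)`, one has
`P(A > a) ≤ 2 C₂ a^{p−d+1} exp(−D₂ a^d (log a)^q)/(D₂ d (log a)^q)`. -/
theorem stmt_0 {Ω : Type*} [MeasurableSpace Ω] (P : Measure Ω)
    [IsProbabilityMeasure P] (A : Ω → ℝ) (hA : Measurable A)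
    (hApos : ∀ ω, 0 < A ω)
    (g : ℝ → ℝ) (hg0 : ∀ s, 0 ≤ g s)
    (hdens : ∀ s : ℝ, (P {ω | s < A ω}).toReal = ∫ x in Set.Ioi s, g x)
    (C₂ D₂ p q : ℝ) (hC₂ : 0 < C₂) (hD₂ : 0 < D₂) (hq : 0 ≤ q)
    (d : ℕ) (hd : 1 ≤ d)
    (a₀ : ℝ)
    (hg : ∀ s, a₀ ≤ s →
      g s ≤ C₂ * s ^ p * Real.exp (-D₂ * s ^ (d : ℝ) * Real.log s ^ q))
    (a : ℝ) (ha₀ : a₀ ≤ a) (hae : Real.exp 1 < a)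
    (hcond : 2 * |p - d + 1| / (D₂ * d) < a ^ (d : ℝ) * Real.log a ^ q) :
    (P {ω | a < A ω}).toReal ≤
      2 * C₂ * a ^ (p - d + 1) * Real.exp (-D₂ * a ^ (d : ℝ) * Real.log a ^ q) /
        (D₂ * d * Real.log a ^ q) := by
  have hd0 : (0 : ℝ) < d := by exact_mod_cast Nat.lt_of_lt_of_le Nat.zero_lt_one hd
  have hDd : 0 < D₂ * d := mul_pos hD₂ hd0
  have ha0 : 0 < a := (Real.exp_pos 1).trans hae
  have hLa0 : 0 < Real.log a := zero_lt_one.trans ((Real.lt_log_iff_exp_lt ha0).2 hae)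
  have hLaq0 : 0 < Real.log a ^ q := Real.rpow_pos_of_pos hLa0 q
  set c : ℝ := 2 * C₂ / (D₂ * d) with hc
  have hc0 : 0 < c := by positivity
  have hderiv : ∀ x ∈ Set.Ici a, HasDerivAt (fun s => -Gfun D₂ p q d s) (-Gd D₂ p q d x) x :=
    fun x hx => (Gfun_hasDerivAt D₂ p q d (hae.trans_le hx)).neg
  have hkey : ∀ x, a ≤ x → D₂ * d / 2 *
      (x ^ p * Real.exp (-D₂ * x ^ (d : ℝ) * Real.log x ^ q)) ≤ -Gd D₂ p q d x :=
    fun x hx => Gd_key D₂ p q hD₂ hq d hd hae hx hcond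
  have hpos : ∀ x ∈ Set.Ioi a, 0 ≤ -Gd D₂ p q d x := by
    intro x hx
    refine le_trans ?_ (hkey x (le_of_lt hx))
    have hx0 : 0 < x := ha0.trans hx
    positivity
  have htend : Tendsto (fun s => -Gfun D₂ p q d s) atTop (𝓝 0) := by
    simpa using (Gfun_tendsto D₂ p q hD₂ hq d hd).neg
  have hint : IntegrableOn (fun x => -Gd D₂ p q d x) (Set.Ioi a) :=
    integrableOn_Ioi_deriv_of_nonneg' hderiv hpos htend
  have heq : ∫ x in Set.Ioi a, -Gd D₂ p q d x = Gfun D₂ p q d a := by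
    rw [integral_Ioi_of_hasDerivAt_of_nonneg' hderiv hpos htend]
    ring
  have hmono : ∫ x in Set.Ioi a, g x ≤ ∫ x in Set.Ioi a, c * (-Gd D₂ p q d x) := by
    apply integral_mono_of_nonneg (ae_of_all _ hg0) (hint.const_mul c)
    filter_upwards [ae_restrict_mem measurableSet_Ioi] with x hx
    have hax : a ≤ x := le_of_lt hx
    have hx0 : 0 < x := ha0.trans_le hax
    have h1 : g x ≤ C₂ * x ^ p * Real.exp (-D₂ * x ^ (d : ℝ) * Real.log x ^ q) :=
      hg x (ha₀.trans hax)
    have h2 := hkey x hax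
    have h3 : C₂ * x ^ p * Real.exp (-D₂ * x ^ (d : ℝ) * Real.log x ^ q)
        = c * (D₂ * d / 2 * (x ^ p * Real.exp (-D₂ * x ^ (d : ℝ) * Real.log x ^ q))) := by
      rw [hc]; field_simp
    calc g x ≤ C₂ * x ^ p * Real.exp (-D₂ * x ^ (d : ℝ) * Real.log x ^ q) := h1
      _ = c * (D₂ * d / 2 * (x ^ p * Real.exp (-D₂ * x ^ (d : ℝ) * Real.log x ^ q))) := h3
      _ ≤ c * (-Gd D₂ p q d x) := by gcongr
  rw [hdens a]
  calc ∫ x in Set.Ioi a, g x ≤ ∫ x in Set.Ioi a, c * (-Gd D₂ p q d x) := hmono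
    _ = c * ∫ x in Set.Ioi a, -Gd D₂ p q d x := MeasureTheory.integral_const_mul c _
    _ = c * Gfun D₂ p q d a := by rw [heq]
    _ = 2 * C₂ * a ^ (p - d + 1) * Real.exp (-D₂ * a ^ (d : ℝ) * Real.log a ^ q) /
        (D₂ * d * Real.log a ^ q) := by
      rw [hc]
      unfold Gfun
      field_simp
end

section
/- The quantile function Φ^{−1} of the standard normal distribution satisfies −√(2 log(1/u)) ≤ Φ^{−1}(u) for every u ∈ (0,1). -/
open MeasureTheory Real Set

/-- The standard normal cumulative distribution function. -/
noncomputable def stdNormalCDF (x : ℝ) : ℝ :=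
  (Real.sqrt (2 * Real.pi))⁻¹ * ∫ t in Set.Iic x, Real.exp (-t ^ 2 / 2)

lemma gauss_eq : (fun t : ℝ => Real.exp (-t ^ 2 / 2)) = fun t : ℝ => Real.exp (-(1/2) * t ^ 2) := by
  funext t; ring_nf

lemma gauss_integrable : MeasureTheory.Integrable (fun t : ℝ => Real.exp (-t ^ 2 / 2)) := by
  rw [gauss_eq]; exact integrable_exp_neg_mul_sq (by norm_num)

lemma gauss_total : (∫ t : ℝ, Real.exp (-t ^ 2 / 2)) = Real.sqrt (2 * Real.pi) := by
  rw [gauss_eq, integral_gaussian]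
  rw [show Real.pi / (1/2) = 2 * Real.pi by ring]

lemma gauss_Iic_zero : (∫ t in Set.Iic (0:ℝ), Real.exp (-t ^ 2 / 2))
    = Real.sqrt (2 * Real.pi) / 2 := by
  have hsymm : (∫ t in Set.Iic (0:ℝ), Real.exp (-t ^ 2 / 2))
      = ∫ t in Set.Ioi (0:ℝ), Real.exp (-t ^ 2 / 2) := by
    have h := integral_comp_neg_Ioi (0:ℝ) (fun t => Real.exp (-t ^ 2 / 2))
    simp only [neg_zero] at h
    rw [← h]
    congr 1; funext t; congr 1; ring
  have hadd := intervalIntegral.integral_Iic_add_Ioi (b := (0:ℝ))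
    (gauss_integrable.integrableOn) (gauss_integrable.integrableOn)
  rw [gauss_total] at hadd
  linarith [hsymm ▸ hadd]

/-- Chernoff-type bound for `x ≤ -1`. -/
lemma gauss_chernoff {x : ℝ} (hx : x ≤ -1) :
    stdNormalCDF x ≤ Real.exp (-x ^ 2 / 2) := by
  set c : ℝ := -x with hc
  have hc1 : (1:ℝ) ≤ c := by simp [hc]; linarith
  have hc0 : (0:ℝ) < c := by linarith
  -- integrability of majorant
  have hint : MeasureTheory.IntegrableOn (fun t : ℝ => Real.exp (c * t)) (Set.Iic x) := by
    rw [← (MeasureTheory.Measure.measurePreserving_neg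
        (volume : MeasureTheory.Measure ℝ)).integrableOn_comp_preimage
        (Homeomorph.neg ℝ).measurableEmbedding]
    simp only [Function.comp_def, neg_preimage, neg_Iic]
    rw [integrableOn_Ici_iff_integrableOn_Ioi]
    refine (exp_neg_integrableOn_Ioi (-x) hc0).congr_fun (fun t ht => ?_) measurableSet_Ioi
    congr 1; ring
  -- value of the majorant integral
  have hval : (∫ t in Set.Iic x, Real.exp (c * t)) = c⁻¹ * Real.exp (-x ^ 2) := by
    have h1 : (∫ t in Set.Iic x, Real.exp (c * t))
        = ∫ s in Set.Ioi (-x), Real.exp (-(c * s)) := by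
      rw [← integral_comp_neg_Iic x (fun s => Real.exp (-(c * s)))]
      congr 1; funext t; ring_nf
    have h2 := integral_comp_mul_left_Ioi (fun s => Real.exp (-s)) (-x) hc0
    rw [h1]
    rw [h2, integral_exp_neg_Ioi]
    rw [smul_eq_mul]
    congr 1
    rw [hc]; ring_nf
  -- pointwise bound
  have hpt : ∀ t ∈ Set.Iic x, Real.exp (-t ^ 2 / 2)
      ≤ Real.exp (x ^ 2 / 2) * Real.exp (c * t) := by
    intro t _
    rw [← Real.exp_add]
    apply Real.exp_le_exp.2
    have : -t ^ 2 / 2 - (x ^ 2 / 2 + c * t) = -((t - x)^2)/2 := by rw [hc]; ring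
    nlinarith [sq_nonneg (t - x)]
  have hmono : (∫ t in Set.Iic x, Real.exp (-t ^ 2 / 2))
      ≤ ∫ t in Set.Iic x, Real.exp (x ^ 2 / 2) * Real.exp (c * t) := by
    apply MeasureTheory.setIntegral_mono_on
      (gauss_integrable.integrableOn) (hint.const_mul _) measurableSet_Iic hpt
  have hval2 : (∫ t in Set.Iic x, Real.exp (x ^ 2 / 2) * Real.exp (c * t))
      = Real.exp (x ^ 2 / 2) * (c⁻¹ * Real.exp (-x ^ 2)) := by
    rw [MeasureTheory.integral_const_mul, hval]
  have hexp : Real.exp (x ^ 2 / 2) * Real.exp (-x ^ 2) = Real.exp (-x ^ 2 / 2) := by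
    rw [← Real.exp_add]; ring_nf
  have hsqrt : (1:ℝ) ≤ Real.sqrt (2 * Real.pi) := by
    rw [show (1:ℝ) = Real.sqrt 1 by simp]
    apply Real.sqrt_le_sqrt
    nlinarith [Real.pi_gt_three]
  have hbound : (∫ t in Set.Iic x, Real.exp (-t ^ 2 / 2))
      ≤ c⁻¹ * Real.exp (-x ^ 2 / 2) := by
    calc (∫ t in Set.Iic x, Real.exp (-t ^ 2 / 2))
        ≤ Real.exp (x ^ 2 / 2) * (c⁻¹ * Real.exp (-x ^ 2)) := hmono.trans_eq hval2
      _ = c⁻¹ * Real.exp (-x ^ 2 / 2) := by rw [← hexp]; ring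
  unfold stdNormalCDF
  have h1 : (Real.sqrt (2 * Real.pi))⁻¹ ≤ 1 := by
    rw [inv_le_one_iff₀]; right; exact hsqrt
  have h2 : c⁻¹ ≤ 1 := by rw [inv_le_one_iff₀]; right; exact hc1
  have hIpos : (0:ℝ) ≤ ∫ t in Set.Iic x, Real.exp (-t ^ 2 / 2) :=
    MeasureTheory.setIntegral_nonneg measurableSet_Iic (fun t _ => (Real.exp_pos _).le)
  have hs0 : (0:ℝ) < (Real.sqrt (2 * Real.pi))⁻¹ := by positivity
  calc (Real.sqrt (2 * Real.pi))⁻¹ * ∫ t in Set.Iic x, Real.exp (-t ^ 2 / 2)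
      ≤ 1 * (c⁻¹ * Real.exp (-x ^ 2 / 2)) := by
        apply mul_le_mul h1 hbound hIpos (by norm_num)
    _ ≤ Real.exp (-x ^ 2 / 2) := by
        rw [one_mul]
        nlinarith [Real.exp_pos (-x ^ 2 / 2)]

lemma gauss_half {x : ℝ} (hx : x ≤ 0) : stdNormalCDF x ≤ 1 / 2 := by
  unfold stdNormalCDF
  have hmono : (∫ t in Set.Iic x, Real.exp (-t ^ 2 / 2))
      ≤ ∫ t in Set.Iic (0:ℝ), Real.exp (-t ^ 2 / 2) := by
    apply MeasureTheory.setIntegral_mono_set gauss_integrable.integrableOn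
      (Filter.Eventually.of_forall fun t => (Real.exp_pos _).le)
      (HasSubset.Subset.eventuallyLE (Set.Iic_subset_Iic.2 hx))
  rw [gauss_Iic_zero] at hmono
  have hs : (0:ℝ) < Real.sqrt (2 * Real.pi) := by positivity
  calc (Real.sqrt (2 * Real.pi))⁻¹ * ∫ t in Set.Iic x, Real.exp (-t ^ 2 / 2)
      ≤ (Real.sqrt (2 * Real.pi))⁻¹ * (Real.sqrt (2 * Real.pi) / 2) := by
        apply mul_le_mul_of_nonneg_left hmono (by positivity)
    _ = 1 / 2 := by field_simp
  
/-- The standard normal quantile function satisfies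
`−√(2 log(1/u)) ≤ Φ⁻¹(u)` for every `u ∈ (0,1)`: if `Φ x = u` then
`−√(2 log(1/u)) ≤ x`. -/
theorem stmt_2 (u x : ℝ) (hu : u ∈ Set.Ioo (0 : ℝ) 1)
    (hx : stdNormalCDF x = u) :
    -Real.sqrt (2 * Real.log (1 / u)) ≤ x := by
  obtain ⟨hu0, hu1⟩ := hu
  rcases le_or_gt 0 x with h0 | h0
  · exact le_trans (neg_nonpos.2 (Real.sqrt_nonneg _)) h0
  -- x < 0; reduce to u ≤ exp (-x^2/2)
  have key : u ≤ Real.exp (-x ^ 2 / 2) := by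
    rcases le_or_gt x (-1) with h1 | h1
    · exact hx ▸ gauss_chernoff h1
    · have h2 : u ≤ 1 / 2 := hx ▸ gauss_half h0.le
      have he : Real.exp ((1:ℝ)/2) ≤ 2 := by
        have h := Real.exp_one_lt_d9
        have hsq : Real.exp ((1:ℝ)/2) * Real.exp ((1:ℝ)/2) = Real.exp 1 := by
          rw [← Real.exp_add]; norm_num
        nlinarith [Real.exp_pos ((1:ℝ)/2)]
      have h3 : (1:ℝ)/2 ≤ Real.exp (-(1:ℝ)/2) := by
        have hmul : Real.exp (-(1:ℝ)/2) * Real.exp ((1:ℝ)/2) = 1 := by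
          rw [← Real.exp_add]; norm_num
        nlinarith [Real.exp_pos (-(1:ℝ)/2)]
      have h4 : Real.exp (-(1:ℝ)/2) ≤ Real.exp (-x ^ 2 / 2) := by
        apply Real.exp_le_exp.2
        nlinarith
      linarith
  -- convert to the sqrt inequality
  have hlog : x ^ 2 ≤ 2 * Real.log (1 / u) := by
    have := Real.log_le_log hu0 key
    rw [Real.log_exp] at this
    rw [Real.log_div one_ne_zero hu0.ne', Real.log_one]
    linarith
  have : -x ≤ Real.sqrt (2 * Real.log (1 / u)) := by
    rw [show -x = Real.sqrt ((-x)^2) by rw [Real.sqrt_sq (by linarith)]]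
    apply Real.sqrt_le_sqrt
    nlinarith
  linarith
end

section
/- Let ν be a finite complex Borel measure on ℝ^d whose total variation measure ‖ν‖ satisfies ∫ exp(δ‖λ‖/2) d‖ν‖(λ) < ∞ for some δ > 0. If ∫ ⟨λ, z⟩^n dν(λ) = 0 for every nonnegative integer n and every z ∈ ℝ^d, then ν is the zero measure. -/
open MeasureTheory Filter Function
open scoped Real Nat FourierTransform RealInnerProductSpace ContDiff

namespace Stmt6Aux

variable {d : ℕ} {μ : Measure (EuclideanSpace ℝ (Fin d))} [SigmaFinite μ]
  {f : EuclideanSpace ℝ (Fin d) → ℂ} {δ : ℝ}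

/-- Polynomially weighted exponential moments. -/
lemma aux_int (hf : AEStronglyMeasurable f μ) (hδ : 0 < δ)
    (hmom : Integrable (fun l => Real.exp (δ * ‖l‖ / 2) * ‖f l‖) μ) (n : ℕ) :
    Integrable (fun l : EuclideanSpace ℝ (Fin d) =>
      ‖l‖ ^ n * (Real.exp (δ * ‖l‖ / 4) * ‖f l‖)) μ := by
  have hcont : Continuous fun l : EuclideanSpace ℝ (Fin d) =>
      ‖l‖ ^ n * Real.exp (δ * ‖l‖ / 4) :=
    (continuous_norm.pow n).mul
      (Real.continuous_exp.comp ((continuous_const.mul continuous_norm).div_const 4))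
  refine (hmom.const_mul ((n ! : ℝ) * (4 / δ) ^ n)).mono'
    ((hcont.aestronglyMeasurable.mul hf.norm).congr (ae_of_all _ fun l => mul_assoc _ _ _)) (ae_of_all _ fun l => ?_)
  set x := ‖l‖ with hx
  have hx0 : 0 ≤ x := norm_nonneg l
  have key : x ^ n ≤ (n ! : ℝ) * (4 / δ) ^ n * Real.exp (δ * x / 4) := by
    have h1 := Real.pow_div_factorial_le_exp (x := δ * x / 4) (by positivity) n
    rw [div_le_iff₀ (by positivity)] at h1
    have h2 : (δ * x / 4) ^ n * (4 / δ) ^ n = x ^ n := by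
      rw [← mul_pow]
      congr 1
      field_simp
    calc x ^ n = (δ * x / 4) ^ n * (4 / δ) ^ n := h2.symm
      _ ≤ Real.exp (δ * x / 4) * ↑n ! * (4 / δ) ^ n := by gcongr
      _ = (n ! : ℝ) * (4 / δ) ^ n * Real.exp (δ * x / 4) := by ring
  have he : Real.exp (δ * x / 4) * Real.exp (δ * x / 4) = Real.exp (δ * x / 2) := by
    rw [← Real.exp_add]; ring_nf
  have hfn : 0 ≤ ‖f l‖ := norm_nonneg _
  rw [Real.norm_of_nonneg (by positivity)]
  calc x ^ n * (Real.exp (δ * x / 4) * ‖f l‖)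
      ≤ ((n ! : ℝ) * (4 / δ) ^ n * Real.exp (δ * x / 4)) * (Real.exp (δ * x / 4) * ‖f l‖) := by
        have hpos : 0 ≤ Real.exp (δ * x / 4) * ‖f l‖ := by positivity
        exact mul_le_mul_of_nonneg_right key hpos
    _ = (n ! : ℝ) * (4 / δ) ^ n * ((Real.exp (δ * x / 4) * Real.exp (δ * x / 4)) * ‖f l‖) := by
        ring
    _ = (n ! : ℝ) * (4 / δ) ^ n * (Real.exp (δ * x / 2) * ‖f l‖) := by rw [he]

/-- Stepping lemma: if all tilted moments vanish at `t`, they vanish at any `s`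
with `|s - t| * ‖z‖ ≤ δ/4`. -/
lemma step (hf : AEStronglyMeasurable f μ) (hδ : 0 < δ)
    (hmom : Integrable (fun l => Real.exp (δ * ‖l‖ / 2) * ‖f l‖) μ)
    (z : EuclideanSpace ℝ (Fin d)) (t s : ℝ) (hst : |s - t| * ‖z‖ ≤ δ / 4)
    (h : ∀ n : ℕ, ∫ l, ((⟪l, z⟫ : ℝ) : ℂ) ^ n *
        Complex.exp ((t * ⟪l, z⟫ : ℝ) * Complex.I) * f l ∂μ = 0)
    (n : ℕ) :
    ∫ l, ((⟪l, z⟫ : ℝ) : ℂ) ^ n *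
      Complex.exp ((s * ⟪l, z⟫ : ℝ) * Complex.I) * f l ∂μ = 0 := by
  set u : ℝ := s - t with hu
  set F : ℕ → EuclideanSpace ℝ (Fin d) → ℂ := fun k l =>
    ((u : ℂ) * Complex.I) ^ k / (k ! : ℂ) *
      (((⟪l, z⟫ : ℝ) : ℂ) ^ (n + k) *
        Complex.exp ((t * ⟪l, z⟫ : ℝ) * Complex.I) * f l) with hF
  have hinner : Continuous fun l : EuclideanSpace ℝ (Fin d) => ⟪l, z⟫ :=
    continuous_id.inner continuous_const
  have hcont : ∀ m : ℕ, Continuous fun l : EuclideanSpace ℝ (Fin d) =>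
      (((⟪l, z⟫ : ℝ) : ℂ) ^ m * Complex.exp ((t * ⟪l, z⟫ : ℝ) * Complex.I)) := by
    intro m
    exact ((Complex.continuous_ofReal.comp hinner).pow m).mul
      (Complex.continuous_exp.comp
        ((Complex.continuous_ofReal.comp (continuous_const.mul hinner)).mul continuous_const))
  have hFm : ∀ k, AEStronglyMeasurable (F k) μ := by
    intro k
    exact (((hcont (n + k)).aestronglyMeasurable.mul hf).const_mul
      (((u : ℂ) * Complex.I) ^ k / (k ! : ℂ))).congr
      (ae_of_all _ fun l => by simp only [hF, Pi.mul_apply]; try ring)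
  have hnorm : ∀ (k : ℕ) l, ‖F k l‖ =
      (|u| * |⟪l, z⟫|) ^ k / (k ! : ℝ) * (|⟪l, z⟫| ^ n * ‖f l‖) := by
    intro k l
    simp only [hF, norm_mul, norm_div, norm_pow, Complex.norm_real,
      Complex.norm_I, Real.norm_eq_abs, Complex.norm_natCast,
      Complex.norm_exp_ofReal_mul_I]
    rw [mul_pow]
    ring
  have hsum : ∀ l, Summable fun k => ‖F k l‖ := by
    intro l
    simp only [hnorm]
    exact (Real.summable_pow_div_factorial _).mul_right _
  have htsum_le : ∀ l : EuclideanSpace ℝ (Fin d), (∑' k, ‖F k l‖) ≤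
      ‖z‖ ^ n * (‖l‖ ^ n * (Real.exp (δ * ‖l‖ / 4) * ‖f l‖)) := by
    intro l
    set a : ℝ := ⟪l, z⟫ with ha
    have h1 : HasSum (fun k => (|u| * |a|) ^ k / (k ! : ℝ)) (Real.exp (|u| * |a|)) := by
      rw [Real.exp_eq_exp_ℝ]
      exact NormedSpace.expSeries_div_hasSum_exp _
    have h2 : (∑' k, ‖F k l‖) = Real.exp (|u| * |a|) * (|a| ^ n * ‖f l‖) := by
      simp only [hnorm]
      exact (h1.mul_right _).tsum_eq
    rw [h2]
    have hab : |a| ≤ ‖l‖ * ‖z‖ := by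
      rw [ha]
      exact abs_real_inner_le_norm l z
    have hua : |u| * |a| ≤ δ * ‖l‖ / 4 := by
      calc |u| * |a| ≤ |u| * (‖l‖ * ‖z‖) := by gcongr
        _ = (|u| * ‖z‖) * ‖l‖ := by ring
        _ ≤ (δ / 4) * ‖l‖ := by gcongr
        _ = δ * ‖l‖ / 4 := by ring
    calc Real.exp (|u| * |a|) * (|a| ^ n * ‖f l‖)
        ≤ Real.exp (δ * ‖l‖ / 4) * ((‖l‖ * ‖z‖) ^ n * ‖f l‖) := by
          gcongr <;> first | exact Real.exp_le_exp.2 hua | exact hab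
      _ = ‖z‖ ^ n * (‖l‖ ^ n * (Real.exp (δ * ‖l‖ / 4) * ‖f l‖)) := by
          rw [mul_pow]; ring
  have hlint : (∑' k, ∫⁻ l, ‖F k l‖₊ ∂μ) ≠ ⊤ := by
    have h1 : ∀ k : ℕ, AEMeasurable (fun l => (‖F k l‖₊ : ENNReal)) μ := fun k => (hFm k).enorm
    rw [← lintegral_tsum h1]
    have hb : ∀ l, (∑' k, (‖F k l‖₊ : ENNReal)) ≤
        ENNReal.ofReal (‖z‖ ^ n * (‖l‖ ^ n * (Real.exp (δ * ‖l‖ / 4) * ‖f l‖))) := by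
      intro l
      have h2 : ∀ k : ℕ, (‖F k l‖₊ : ENNReal) = ENNReal.ofReal ‖F k l‖ := fun k =>
        (ofReal_norm_eq_enorm (F k l)).symm
      simp only [h2]
      rw [← ENNReal.ofReal_tsum_of_nonneg (fun k => norm_nonneg _) (hsum l)]
      exact ENNReal.ofReal_le_ofReal (htsum_le l)
    refine ne_top_of_le_ne_top ?_ (lintegral_mono hb)
    have hInt : Integrable (fun l : EuclideanSpace ℝ (Fin d) =>
        ‖z‖ ^ n * (‖l‖ ^ n * (Real.exp (δ * ‖l‖ / 4) * ‖f l‖))) μ :=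
      (aux_int hf hδ hmom n).const_mul _
    exact ((hasFiniteIntegral_iff_ofReal (ae_of_all _ fun l => by positivity)).1 hInt.2).ne
  have hpt : ∀ l : EuclideanSpace ℝ (Fin d),
      ((⟪l, z⟫ : ℝ) : ℂ) ^ n * Complex.exp ((s * ⟪l, z⟫ : ℝ) * Complex.I) * f l
        = ∑' k, F k l := by
    intro l
    set a : ℝ := ⟪l, z⟫ with ha
    have h1 : HasSum (fun k : ℕ => ((u : ℂ) * (a : ℂ) * Complex.I) ^ k / (k ! : ℂ))
        (Complex.exp ((u : ℂ) * (a : ℂ) * Complex.I)) := by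
      rw [Complex.exp_eq_exp_ℂ]
      exact NormedSpace.expSeries_div_hasSum_exp _
    have h2 := h1.mul_right (((a : ℝ) : ℂ) ^ n * Complex.exp ((t * a : ℝ) * Complex.I) * f l)
    have h3 : ∀ k : ℕ, ((u : ℂ) * (a : ℂ) * Complex.I) ^ k / (k ! : ℂ) *
        (((a : ℝ) : ℂ) ^ n * Complex.exp ((t * a : ℝ) * Complex.I) * f l) = F k l := by
      intro k
      simp only [hF]
      rw [mul_pow, mul_pow]
      ring
    simp only [h3] at h2
    have h5 : Complex.exp ((u : ℂ) * (a : ℂ) * Complex.I) *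
        (((a : ℝ) : ℂ) ^ n * Complex.exp ((t * a : ℝ) * Complex.I) * f l)
          = ((a : ℝ) : ℂ) ^ n * Complex.exp ((s * a : ℝ) * Complex.I) * f l := by
      have h6 : ((s * a : ℝ) : ℂ) * Complex.I
          = (u : ℂ) * (a : ℂ) * Complex.I + ((t * a : ℝ) : ℂ) * Complex.I := by
        push_cast [hu]
        ring
      rw [h6, Complex.exp_add]
      ring
    rw [h2.tsum_eq, h5]
  calc ∫ l, ((⟪l, z⟫ : ℝ) : ℂ) ^ n * Complex.exp ((s * ⟪l, z⟫ : ℝ) * Complex.I) * f l ∂μ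
      = ∫ l, ∑' k, F k l ∂μ := integral_congr_ae (ae_of_all _ hpt)
    _ = ∑' k, ∫ l, F k l ∂μ := integral_tsum hFm hlint
    _ = 0 := by
        have hzero : ∀ k : ℕ, ∫ l, F k l ∂μ = 0 := by
          intro k
          simp only [hF]
          rw [MeasureTheory.integral_const_mul, h (n + k), mul_zero]
        simp only [hzero]
        exact tsum_zero

/-- All tilted moments vanish, for every frequency `t`. -/
lemma vanish (hf : AEStronglyMeasurable f μ) (hδ : 0 < δ)
    (hmom : Integrable (fun l => Real.exp (δ * ‖l‖ / 2) * ‖f l‖) μ)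
    (hpoly : ∀ (n : ℕ) (z : EuclideanSpace ℝ (Fin d)),
      ∫ l, ((inner ℝ l z : ℝ) : ℂ) ^ n * f l ∂μ = 0)
    (z : EuclideanSpace ℝ (Fin d)) (t : ℝ) (n : ℕ) :
    ∫ l, ((⟪l, z⟫ : ℝ) : ℂ) ^ n *
      Complex.exp ((t * ⟪l, z⟫ : ℝ) * Complex.I) * f l ∂μ = 0 := by
  set r : ℝ := δ / (4 * (‖z‖ + 1)) with hr
  have h01 : (0 : ℝ) < ‖z‖ + 1 := by positivity
  have hrpos : 0 < r := by positivity
  have hstep : ∀ m : ℕ, ∀ t : ℝ, |t| ≤ m * r → ∀ n : ℕ,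
      ∫ l, ((⟪l, z⟫ : ℝ) : ℂ) ^ n *
        Complex.exp ((t * ⟪l, z⟫ : ℝ) * Complex.I) * f l ∂μ = 0 := by
    intro m
    induction m with
    | zero =>
      intro t ht n
      have ht0 : t = 0 := by
        have : |t| ≤ 0 := by simpa using ht
        exact abs_eq_zero.1 (le_antisymm this (abs_nonneg t))
      subst ht0
      simpa [Complex.exp_zero] using hpoly n z
    | succ m ih =>
      intro t ht n
      have hm1 : (0 : ℝ) < (m : ℝ) + 1 := by positivity
      have ht' : |t| ≤ ((m : ℝ) + 1) * r := by
        have := ht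
        push_cast at this
        linarith
      set t' : ℝ := t * m / ((m : ℝ) + 1) with ht'def
      have h1 : |t'| ≤ (m : ℝ) * r := by
        rw [ht'def, abs_div, abs_mul, Nat.abs_cast, abs_of_pos hm1, div_le_iff₀ hm1]
        calc |t| * (m : ℝ) ≤ (((m : ℝ) + 1) * r) * m := by
              gcongr
          _ = (m : ℝ) * r * ((m : ℝ) + 1) := by ring
      have h2 : |t - t'| * ‖z‖ ≤ δ / 4 := by
        have hdiff : t - t' = t / ((m : ℝ) + 1) := by
          rw [ht'def]
          field_simp
          ring
        rw [hdiff, abs_div, abs_of_pos hm1]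
        have h3 : |t| / ((m : ℝ) + 1) ≤ r := by
          rw [div_le_iff₀ hm1]
          calc |t| ≤ ((m : ℝ) + 1) * r := ht'
            _ = r * ((m : ℝ) + 1) := by ring
        calc |t| / ((m : ℝ) + 1) * ‖z‖ ≤ r * ‖z‖ := by
              gcongr
          _ ≤ δ / 4 := by
              rw [hr, div_mul_eq_mul_div, div_le_div_iff₀ (by positivity) (by norm_num)]
              nlinarith [norm_nonneg z, hδ.le]
      exact step hf hδ hmom z t' t h2 (ih t' h1) n
  refine hstep ⌈|t| / r⌉₊ t ?_ n
  rw [← div_le_iff₀ hrpos]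
  exact Nat.le_ceil _

end Stmt6Aux

/-- Let `ν` be a finite complex Borel measure on `ℝ^d`, represented as
`ν = f • μ` with `μ` a (σ-finite) positive measure and `f` a complex density,
so that the total variation of `ν` is `‖f‖ • μ`. Assume
`∫ exp(δ‖λ‖/2) d‖ν‖(λ) < ∞` for some `δ > 0`. If
`∫ ⟨λ, z⟩^n dν(λ) = 0` for every `n ∈ ℕ` and every `z ∈ ℝ^d`, then `ν` is the
zero measure, i.e. `f = 0` μ-almost everywhere. -/
theorem stmt_6 {d : ℕ} (μ : Measure (EuclideanSpace ℝ (Fin d)))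
    [SigmaFinite μ] (f : EuclideanSpace ℝ (Fin d) → ℂ)
    (hf : AEStronglyMeasurable f μ)
    (δ : ℝ) (hδ : 0 < δ)
    (hmom : Integrable (fun l => Real.exp (δ * ‖l‖ / 2) * ‖f l‖) μ)
    (hpoly : ∀ (n : ℕ) (z : EuclideanSpace ℝ (Fin d)),
      ∫ l, ((inner ℝ l z : ℝ) : ℂ) ^ n * f l ∂μ = 0) :
    f =ᵐ[μ] 0 := by
  classical
  have hf_int : Integrable f μ := by
    refine hmom.mono' hf (ae_of_all _ fun l => ?_)
    have h1 : (1 : ℝ) ≤ Real.exp (δ * ‖l‖ / 2) := Real.one_le_exp (by positivity)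
    calc ‖f l‖ = 1 * ‖f l‖ := (one_mul _).symm
      _ ≤ Real.exp (δ * ‖l‖ / 2) * ‖f l‖ := by
          gcongr
  have hvanish : ∀ (z : EuclideanSpace ℝ (Fin d)) (t : ℝ),
      ∫ l, Complex.exp ((t * ⟪l, z⟫ : ℝ) * Complex.I) * f l ∂μ = 0 := by
    intro z t
    have := Stmt6Aux.vanish hf hδ hmom hpoly z t 0
    simpa using this
  have key : ∀ᵐ x ∂μ, f x = 0 := by
    apply ae_eq_zero_of_integral_contDiff_smul_eq_zero hf_int.locallyIntegrable
    intro g hg hgsupp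
    set G : EuclideanSpace ℝ (Fin d) → ℂ := fun x => (g x : ℂ) with hG
    have hG_cont : Continuous G := Complex.continuous_ofReal.comp hg.continuous
    have hG_supp : HasCompactSupport G :=
      hgsupp.comp_left (g := fun r : ℝ => (r : ℂ)) (by simp)
    have hG_int : Integrable G := hG_cont.integrable_of_hasCompactSupport hG_supp
    have hderiv_int : ∀ (k m : ℕ),
        Integrable (fun v : EuclideanSpace ℝ (Fin d) =>
          ‖v‖ ^ k * ‖iteratedFDeriv ℝ m G v‖) := by
      intro k m
      have hG_smooth : ContDiff ℝ (∞ : WithTop ℕ∞) G :=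
        (Complex.ofRealCLM.contDiff).comp hg
      have hc : Continuous fun v : EuclideanSpace ℝ (Fin d) =>
          ‖v‖ ^ k * ‖iteratedFDeriv ℝ m G v‖ :=
        (continuous_norm.pow k).mul (hG_smooth.continuous_iteratedFDeriv (by
          exact_mod_cast le_top)).norm
      have hsupp : HasCompactSupport fun v : EuclideanSpace ℝ (Fin d) =>
          ‖v‖ ^ k * ‖iteratedFDeriv ℝ m G v‖ :=
        HasCompactSupport.mul_left ((hG_supp.iteratedFDeriv m).norm)
      exact hc.integrable_of_hasCompactSupport hsupp
    have hFcont : Continuous (𝓕 G) := by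
      exact VectorFourier.fourierIntegral_continuous Real.continuous_fourierChar
        (by exact continuous_inner) hG_int
    have hG_smooth2 : ContDiff ℝ ((d + 1 : ℕ) : ℕ∞) G :=
      ((Complex.ofRealCLM.contDiff).comp hg).of_le (by exact_mod_cast le_top)
    have hdecayAll := fun w : EuclideanSpace ℝ (Fin d) =>
      Real.pow_mul_norm_iteratedFDeriv_fourier_le
        (K := (0 : ℕ∞)) (N := ((d + 1 : ℕ) : ℕ∞)) hG_smooth2
        (fun k m _ _ => hderiv_int k m) (k := 0) (n := d + 1) le_rfl le_rfl w
    obtain ⟨C1, hC1⟩ : ∃ C : ℝ, ∀ w : EuclideanSpace ℝ (Fin d),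
        ‖w‖ ^ (d + 1) * ‖𝓕 G w‖ ≤ C :=
      ⟨_, fun w => by simpa [norm_iteratedFDeriv_zero] using hdecayAll w⟩
    set M : ℝ := ∫ v, ‖G v‖ with hM
    have hbound0 : ∀ w : EuclideanSpace ℝ (Fin d), ‖𝓕 G w‖ ≤ M :=
      fun w => VectorFourier.norm_fourierIntegral_le_integral_norm _ _ _ _ _
    have hmaj : ∀ w : EuclideanSpace ℝ (Fin d),
        ‖𝓕 G w‖ ≤ ((2 : ℝ) ^ (d + 1) * (M + C1)) * (1 + ‖w‖) ^ (-((d + 1 : ℕ) : ℝ)) := by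
      intro w
      have hx : (0 : ℝ) ≤ ‖w‖ := norm_nonneg w
      have h1p : (0 : ℝ) < 1 + ‖w‖ := by positivity
      rw [Real.rpow_neg h1p.le, ← div_eq_mul_inv, le_div_iff₀ (by positivity)]
      rw [Real.rpow_natCast]
      have hpow : (1 + ‖w‖) ^ (d + 1) ≤ 2 ^ (d + 1) * (1 + ‖w‖ ^ (d + 1)) := by
        have hle : 1 + ‖w‖ ≤ 2 * max 1 ‖w‖ := by
          rcases le_total ‖w‖ 1 with h | h
          · rw [max_eq_left h]; linarith
          · rw [max_eq_right h]; linarith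
        calc (1 + ‖w‖) ^ (d + 1) ≤ (2 * max 1 ‖w‖) ^ (d + 1) := by
              gcongr
          _ = 2 ^ (d + 1) * (max 1 ‖w‖) ^ (d + 1) := mul_pow _ _ _
          _ ≤ 2 ^ (d + 1) * (1 + ‖w‖ ^ (d + 1)) := by
              gcongr
              rcases max_cases 1 ‖w‖ with ⟨h1, _⟩ | ⟨h1, _⟩ <;> rw [h1]
              · simp only [one_pow]
                nlinarith [pow_nonneg hx (d + 1)]
              · nlinarith
      calc ‖𝓕 G w‖ * (1 + ‖w‖) ^ (d + 1)
          ≤ ‖𝓕 G w‖ * (2 ^ (d + 1) * (1 + ‖w‖ ^ (d + 1))) := by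
            gcongr
          _ = 2 ^ (d + 1) * (‖𝓕 G w‖ + ‖w‖ ^ (d + 1) * ‖𝓕 G w‖) := by ring
          _ ≤ 2 ^ (d + 1) * (M + C1) := by
            gcongr
            · exact hbound0 w
            · exact hC1 w
    have hFG_int : Integrable (𝓕 G) := by
      have hr : ((Module.finrank ℝ (EuclideanSpace ℝ (Fin d)) : ℝ)) < ((d + 1 : ℕ) : ℝ) := by
        rw [finrank_euclideanSpace_fin]
        exact_mod_cast Nat.lt_succ_self d
      exact ((integrable_one_add_norm hr).const_mul _).mono'
        hFcont.aestronglyMeasurable (ae_of_all _ fun w => hmaj w)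
    have hinv : ∀ x : EuclideanSpace ℝ (Fin d),
        G x = ∫ ξ : EuclideanSpace ℝ (Fin d),
          Complex.exp ((2 * π * ⟪ξ, x⟫ : ℝ) * Complex.I) • 𝓕 G ξ := by
      intro x
      conv_lhs => rw [← hG_cont.fourierInv_fourier_eq hG_int hFG_int]
      rw [Real.fourierInv_eq']
    have hswap_int : Integrable (uncurry fun (x ξ : EuclideanSpace ℝ (Fin d)) =>
        Complex.exp ((2 * π * ⟪ξ, x⟫ : ℝ) * Complex.I) * 𝓕 G ξ * f x)
        (μ.prod volume) := by
      have hmeas : AEStronglyMeasurable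
          (fun p : EuclideanSpace ℝ (Fin d) × EuclideanSpace ℝ (Fin d) =>
            Complex.exp ((2 * π * ⟪p.2, p.1⟫ : ℝ) * Complex.I) * 𝓕 G p.2 * f p.1)
          (μ.prod volume) := by
        refine AEStronglyMeasurable.mul (AEStronglyMeasurable.mul ?_ ?_) hf.comp_fst
        · exact (Complex.continuous_exp.comp
            ((Complex.continuous_ofReal.comp
              (continuous_const.mul (continuous_snd.inner continuous_fst))).mul
                continuous_const)).aestronglyMeasurable
        · exact (hFcont.comp continuous_snd).aestronglyMeasurable
      refine ((hf_int.norm.mul_prod hFG_int.norm).mono' hmeas (ae_of_all _ fun p => ?_))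
      have : ‖Complex.exp ((2 * π * ⟪p.2, p.1⟫ : ℝ) * Complex.I) * 𝓕 G p.2 * f p.1‖
          = ‖f p.1‖ * ‖𝓕 G p.2‖ := by
        simp only [norm_mul]
        rw [Complex.norm_exp_ofReal_mul_I]
        ring
      exact le_of_eq this
    have hz : ∀ ξ : EuclideanSpace ℝ (Fin d),
        ∫ x, Complex.exp ((2 * π * ⟪ξ, x⟫ : ℝ) * Complex.I) * 𝓕 G ξ * f x ∂μ = 0 := by
      intro ξ
      have h0 : ∫ x, Complex.exp ((2 * π * ⟪ξ, x⟫ : ℝ) * Complex.I) * f x ∂μ = 0 := by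
        rw [← hvanish ξ (2 * π)]
        refine integral_congr_ae (ae_of_all _ fun x => ?_)
        simp only [real_inner_comm ξ x]
      have hre : ∀ x : EuclideanSpace ℝ (Fin d),
          Complex.exp ((2 * π * ⟪ξ, x⟫ : ℝ) * Complex.I) * 𝓕 G ξ * f x
            = 𝓕 G ξ * (Complex.exp ((2 * π * ⟪ξ, x⟫ : ℝ) * Complex.I) * f x) :=
        fun x => by ring
      simp only [hre]
      rw [MeasureTheory.integral_const_mul, h0, mul_zero]
    calc ∫ x, g x • f x ∂μ
        = ∫ x, G x * f x ∂μ := by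
          refine integral_congr_ae (ae_of_all _ fun x => ?_)
          simp only [hG, Complex.real_smul]
      _ = ∫ x, (∫ ξ : EuclideanSpace ℝ (Fin d),
            Complex.exp ((2 * π * ⟪ξ, x⟫ : ℝ) * Complex.I) • 𝓕 G ξ) * f x ∂μ := by
          refine integral_congr_ae (ae_of_all _ fun x => ?_)
          exact congrArg (· * f x) (hinv x)
      _ = ∫ x, ∫ ξ : EuclideanSpace ℝ (Fin d),
            Complex.exp ((2 * π * ⟪ξ, x⟫ : ℝ) * Complex.I) * 𝓕 G ξ * f x ∂volume ∂μ := by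
          refine integral_congr_ae (ae_of_all _ fun x => ?_)
          simp only [smul_eq_mul]
          rw [← MeasureTheory.integral_mul_const]
      _ = ∫ ξ : EuclideanSpace ℝ (Fin d), ∫ x,
            Complex.exp ((2 * π * ⟪ξ, x⟫ : ℝ) * Complex.I) * 𝓕 G ξ * f x ∂μ ∂volume :=
          integral_integral_swap hswap_int
      _ = 0 := by
          simp only [hz]
          exact integral_zero _ _
  filter_upwards [key] with x hx
  simpa using hx
end
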